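/- If f, g, h are real-rooted polynomials with nonnegative real coefficients such that h interlaces f and h interlaces g, then h interlaces f + g. -/

import Mathlib

/-- The list of real roots of `f` (with multiplicity), in decreasing order. -/
noncomputable def rootsDesc (f : Polynomial ℝ) : List ℝ :=
  (f.roots.sort (· ≤ ·)).reverse

/-- A real polynomial is real-rooted if it has as many real roots
(counted with multiplicity) as its degree. -/
def RealRooted (f : Polynomial ℝ) : Prop :=
  Multiset.card f.roots = f.natDegree

/-- `g` interlaces `f` (written `g ⪯ f`): both are real-rooted with positive leading
coefficients, the degrees differ by at most one, and with roots listed in decreasing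
order `⋯ ≤ β₂ ≤ α₂ ≤ β₁ ≤ α₁`. -/
def Interlaces (g f : Polynomial ℝ) : Prop :=
  RealRooted f ∧ RealRooted g ∧ 0 < f.leadingCoeff ∧ 0 < g.leadingCoeff ∧
  (f.natDegree = g.natDegree ∨ f.natDegree = g.natDegree + 1) ∧
  (∀ (i : ℕ) (hg : i < (rootsDesc g).length) (hf : i < (rootsDesc f).length),
    (rootsDesc g).get ⟨i, hg⟩ ≤ (rootsDesc f).get ⟨i, hf⟩) ∧
  (∀ (i : ℕ) (hf : i + 1 < (rootsDesc f).length) (hg : i < (rootsDesc g).length),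
    (rootsDesc f).get ⟨i + 1, hf⟩ ≤ (rootsDesc g).get ⟨i, hg⟩)



open Polynomial

lemma listHelper {l : List ℝ} {p : ℝ → Bool}
    (mono : ∀ i j (hi : i < l.length) (hj : j < l.length), i ≤ j →
      p (l.get ⟨j, hj⟩) = true → p (l.get ⟨i, hi⟩) = true) :
    ∀ i (hi : i < l.length), (p (l.get ⟨i, hi⟩) = true ↔ i < l.countP p) := by
  induction l with
  | nil => intro i hi; simp at hi
  | cons a t ih =>
    have ha0 : (a :: t).get ⟨0, by simp⟩ = a := rfl
    by_cases ha : p a = true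
    · have mono' : ∀ i j (hi : i < t.length) (hj : j < t.length), i ≤ j →
          p (t.get ⟨j, hj⟩) = true → p (t.get ⟨i, hi⟩) = true := by
        intro i j hi hj hij hp
        exact mono (i+1) (j+1) (by simpa using hi) (by simpa using hj) (by omega) hp
      intro i hi
      cases i with
      | zero => simp [List.countP_cons, ha]
      | succ i =>
        have hi' : i < t.length := by simpa using hi
        have := ih mono' i hi'
        simpa [List.countP_cons, ha] using this
    · have hz : t.countP p = 0 := by
        apply List.countP_eq_zero.2
        intro b hb
        obtain ⟨k, hk, rfl⟩ := List.mem_iff_get.1 hb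
        intro hp
        exact ha (mono 0 (k+1) (by simp) (by simpa using k.isLt) (by omega)
          (by simpa using hp))
      intro i hi
      have hc : (a :: t).countP p = 0 := by
        simp [List.countP_cons, ha, hz]
      rw [hc]
      simp only [Nat.not_lt_zero, iff_false]
      cases i with
      | zero => simpa using ha
      | succ i =>
        intro hp
        exact ha (mono 0 (i+1) (by simp) hi (by omega) hp)


noncomputable def Np (p : Polynomial ℝ) (x : ℝ) : ℕ := p.roots.countP (x ≤ ·)
noncomputable def Pp (p : Polynomial ℝ) (x : ℝ) : ℕ := p.roots.countP (x < ·)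

lemma coe_rootsDesc (p : Polynomial ℝ) : (↑(rootsDesc p) : Multiset ℝ) = p.roots := by
  unfold rootsDesc; rw [Multiset.coe_reverse, Multiset.sort_eq]

lemma length_rootsDesc (p : Polynomial ℝ) :
    (rootsDesc p).length = Multiset.card p.roots := by
  unfold rootsDesc; simp

lemma rootsDesc_anti (p : Polynomial ℝ) (i j : ℕ) (hi : i < (rootsDesc p).length)
    (hj : j < (rootsDesc p).length) (hij : i ≤ j) :
    (rootsDesc p).get ⟨j, hj⟩ ≤ (rootsDesc p).get ⟨i, hi⟩ := by
  have hs : (p.roots.sort (· ≤ ·)).Pairwise (· ≤ ·) := p.roots.pairwise_sort _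
  have hlen : (rootsDesc p).length = (p.roots.sort (· ≤ ·)).length := by
    unfold rootsDesc; simp
  unfold rootsDesc at *
  simp only [List.get_eq_getElem, List.getElem_reverse]
  exact hs.rel_get_of_le (a := ⟨_, by omega⟩) (b := ⟨_, by omega⟩) (by simp; omega)

lemma le_get_iff (p : Polynomial ℝ) (x : ℝ) (i : ℕ) (hi : i < (rootsDesc p).length) :
    x ≤ (rootsDesc p).get ⟨i, hi⟩ ↔ i < Np p x := by
  have h1 : Np p x = (rootsDesc p).countP (fun a => decide (x ≤ a)) := by
    rw [Np, ← coe_rootsDesc p, Multiset.coe_countP]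
  rw [h1, ← listHelper (p := fun a => decide (x ≤ a)) ?mono i hi]
  · simp
  case mono =>
    intro i j hi hj hij hp
    simp only [decide_eq_true_eq] at hp ⊢
    exact le_trans hp (rootsDesc_anti p i j hi hj hij)

lemma lt_get_iff (p : Polynomial ℝ) (x : ℝ) (i : ℕ) (hi : i < (rootsDesc p).length) :
    x < (rootsDesc p).get ⟨i, hi⟩ ↔ i < Pp p x := by
  have h1 : Pp p x = (rootsDesc p).countP (fun a => decide (x < a)) := by
    rw [Pp, ← coe_rootsDesc p, Multiset.coe_countP]
  rw [h1, ← listHelper (p := fun a => decide (x < a)) ?mono i hi]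
  · simp
  case mono =>
    intro i j hi hj hij hp
    simp only [decide_eq_true_eq] at hp ⊢
    exact lt_of_lt_of_le hp (rootsDesc_anti p i j hi hj hij)

lemma Np_eq_Pp_add_count (p : Polynomial ℝ) (x : ℝ) :
    Np p x = Pp p x + p.roots.count x := by
  rw [Np, Pp, Multiset.count]
  refine Multiset.induction_on p.roots (by simp) ?_
  intro a s ih
  simp only [Multiset.countP_cons, ih]
  rcases lt_trichotomy x a with h | h | h
  · rw [if_pos h.le, if_pos h, if_neg (by exact h.ne)]; ring
  · rw [if_pos h.le, if_neg (by simp [h]), if_pos h]; ring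
  · rw [if_neg (by exact not_le.2 h), if_neg (by exact not_lt.2 h.le), if_neg (by exact (ne_of_gt h))]; ring

lemma exists_sep (s : Multiset ℝ) (γ : ℝ) : ∃ x, γ < x ∧ ∀ a ∈ s, γ < a → x ≤ a := by
  refine Multiset.induction_on s ⟨γ+1, by linarith, by simp⟩ ?_
  rintro a t ⟨x, hx, hall⟩
  by_cases ha : γ < a
  · refine ⟨min x a, by simp [hx, ha], ?_⟩
    intro b hb hgb
    rcases Multiset.mem_cons.1 hb with rfl | hb
    · exact min_le_right _ _
    · exact le_trans (min_le_left _ _) (hall b hb hgb)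
  · refine ⟨x, hx, ?_⟩
    intro b hb hgb
    rcases Multiset.mem_cons.1 hb with rfl | hb
    · exact absurd hgb ha
    · exact hall b hb hgb

lemma Np_sep (p : Polynomial ℝ) {γ x : ℝ} (hγx : γ < x)
    (hall : ∀ a ∈ p.roots, γ < a → x ≤ a) : Np p x = Pp p γ := by
  rw [Np, Pp]
  refine Multiset.countP_congr rfl ?_
  intro a ha
  simp only [eq_iff_iff]
  exact ⟨fun h => lt_of_lt_of_le hγx h, fun h => hall a ha h⟩

lemma Pp_le_Pp (f h : Polynomial ℝ) (hb : ∀ x, Np f x ≤ Np h x + 1) (γ : ℝ) :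
    Pp f γ ≤ Pp h γ + 1 := by
  obtain ⟨x, hγx, hall⟩ := exists_sep (f.roots + h.roots) γ
  rw [← Np_sep f hγx (fun a ha => hall a (Multiset.mem_add.2 (Or.inl ha))),
      ← Np_sep h hγx (fun a ha => hall a (Multiset.mem_add.2 (Or.inr ha)))]
  exact hb x

lemma prod_sign : ∀ (s : Multiset ℝ), (∀ a ∈ s, a ≠ 0) →
    0 < (-1:ℝ)^(s.countP (· < 0)) * s.prod := by
  intro s
  refine Multiset.induction_on s (by simp) ?_
  intro a t ih h0
  have ha : a ≠ 0 := h0 a (Multiset.mem_cons_self _ _)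
  have ht := ih (fun b hb => h0 b (Multiset.mem_cons_of_mem hb))
  rw [Multiset.countP_cons, Multiset.prod_cons]
  by_cases hlt : a < 0
  · rw [if_pos hlt, pow_add, pow_one]
    nlinarith [ht]
  · have hpos : 0 < a := lt_of_le_of_ne (not_lt.1 hlt) (Ne.symm ha)
    rw [if_neg hlt, add_zero]
    nlinarith [ht]

lemma eval_sign (p : Polynomial ℝ) (hp : RealRooted p) (hlc : 0 < p.leadingCoeff)
    (x : ℝ) (hx : p.eval x ≠ 0) : 0 < (-1:ℝ)^(Pp p x) * p.eval x := by
  have hsplit : p.Splits := (Polynomial.splits_iff_card_roots).2 hp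
  have heval : p.eval x = p.leadingCoeff * ((p.roots.map (fun a => x - a)).prod) := by
    conv_lhs => rw [hsplit.eq_prod_roots]
    rw [Polynomial.eval_mul, Polynomial.eval_C, Polynomial.eval_multiset_prod,
      Multiset.map_map]
    congr 1
    have : ∀ a ∈ p.roots, (Polynomial.eval x ∘ fun a => Polynomial.X - Polynomial.C a) a = x - a := by
      intro a _; simp
    exact congrArg Multiset.prod (Multiset.map_congr rfl this)
  have h0 : ∀ b ∈ p.roots.map (fun a => x - a), b ≠ 0 := by
    intro b hb
    obtain ⟨a, ha, rfl⟩ := Multiset.mem_map.1 hb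
    intro hc
    have : a = x := by linarith [sub_eq_zero.1 hc]
    subst this
    exact hx ((Polynomial.isRoot_of_mem_roots ha))
  have hcount : (p.roots.map (fun a => x - a)).countP (· < 0) = Pp p x := by
    rw [Multiset.countP_map, Pp, Multiset.countP_eq_card_filter]
    congr 1
    refine Multiset.filter_congr ?_
    intro a _
    constructor
    · intro h; simp at h ⊢; linarith
    · intro h; simp at h ⊢; linarith
  have := prod_sign _ h0
  rw [hcount] at this
  rw [heval]
  nlinarith [this]

lemma add_lc (f g : Polynomial ℝ) (hf : 0 < f.leadingCoeff) (hg : 0 < g.leadingCoeff) :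
    (f + g).natDegree = max f.natDegree g.natDegree ∧ 0 < (f + g).leadingCoeff := by
  have hf0 : f ≠ 0 := fun h => by simp [h] at hf
  have hg0 : g ≠ 0 := fun h => by simp [h] at hg
  rcases lt_trichotomy f.natDegree g.natDegree with h | h | h
  · have hd : f.degree < g.degree := by
      rwa [Polynomial.degree_eq_natDegree hf0, Polynomial.degree_eq_natDegree hg0,
        Nat.cast_lt]
    refine ⟨?_, ?_⟩
    · rw [Polynomial.natDegree_add_eq_right_of_natDegree_lt h]; omega
    · rw [Polynomial.leadingCoeff_add_of_degree_lt hd]; exact hg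
  · have hd : f.degree = g.degree := by
      rw [Polynomial.degree_eq_natDegree hf0, Polynomial.degree_eq_natDegree hg0, h]
    have hlc : (f + g).leadingCoeff = f.leadingCoeff + g.leadingCoeff :=
      Polynomial.leadingCoeff_add_of_degree_eq hd (by positivity)
    have hdeg : (f + g).degree = g.degree := by
      rw [Polynomial.degree_add_eq_of_leadingCoeff_add_ne_zero]
      · exact max_eq_right hd.le
      · positivity
    refine ⟨?_, by rw [hlc]; positivity⟩
    have : (f + g).natDegree = g.natDegree := by
      apply Polynomial.natDegree_eq_of_degree_eq
      rw [hdeg]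
    omega
  · have hd : g.degree < f.degree := by
      rwa [Polynomial.degree_eq_natDegree hf0, Polynomial.degree_eq_natDegree hg0,
        Nat.cast_lt]
    refine ⟨?_, ?_⟩
    · rw [add_comm, Polynomial.natDegree_add_eq_right_of_natDegree_lt h]; omega
    · rw [Polynomial.leadingCoeff_add_of_degree_lt' hd]; exact hf

lemma exists_gt_pos (F : Polynomial ℝ) (hlc : 0 < F.leadingCoeff) (hdeg : 0 < F.natDegree)
    (c : ℝ) : ∃ b, c < b ∧ 0 < F.eval b := by
  have ht := Polynomial.tendsto_atTop_of_leadingCoeff_nonneg F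
    (Polynomial.natDegree_pos_iff_degree_pos.1 hdeg) hlc.le
  have h1 : ∀ᶠ b in Filter.atTop, 0 < Polynomial.eval b F := ht.eventually_gt_atTop 0
  have h2 : ∀ᶠ b in Filter.atTop, c < b := Filter.eventually_gt_atTop c
  obtain ⟨b, hb1, hb2⟩ := (h2.and h1).exists
  exact ⟨b, hb1, hb2⟩

lemma exists_root_between (F : Polynomial ℝ) {a b : ℝ} (hab : a < b)
    (ha : F.eval a < 0) (hb : 0 < F.eval b) : ∃ x, a < x ∧ x < b ∧ F.eval x = 0 := by
  have hc : ContinuousOn (fun x => F.eval x) (Set.Icc a b) :=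
    (Polynomial.continuous F).continuousOn
  have h0 : (0:ℝ) ∈ Set.Ioo (F.eval a) (F.eval b) := ⟨ha, hb⟩
  obtain ⟨x, hx, hfx⟩ := intermediate_value_Ioo hab.le hc h0
  exact ⟨x, hx.1, hx.2, hfx⟩

lemma exists_lt_sign (F : Polynomial ℝ) (hlc : 0 < F.leadingCoeff) (hdeg : 0 < F.natDegree)
    (c : ℝ) : ∃ a, a < c ∧ 0 < (-1:ℝ)^F.natDegree * F.eval a := by
  set q : Polynomial ℝ := Polynomial.C (2*c) - Polynomial.X with hq
  have hqd : q.natDegree = 1 := by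
    rw [hq]
    have : Polynomial.C (2*c) - Polynomial.X = -(Polynomial.X - Polynomial.C (2*c)) := by ring
    rw [this, Polynomial.natDegree_neg, Polynomial.natDegree_X_sub_C]
  have hqlc : q.leadingCoeff = -1 := by
    have : q = -(Polynomial.X - Polynomial.C (2*c)) := by rw [hq]; ring
    rw [this, Polynomial.leadingCoeff_neg, Polynomial.leadingCoeff_X_sub_C]
  set G := F.comp q with hG
  have hGd : G.natDegree = F.natDegree := by
    rw [hG, Polynomial.natDegree_comp, hqd, mul_one]
  have hGlc : G.leadingCoeff = F.leadingCoeff * (-1:ℝ)^F.natDegree := by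
    rw [hG, Polynomial.leadingCoeff_comp (by rw [hqd]; omega), hqlc]
  have hGeval : ∀ b : ℝ, G.eval b = F.eval (2*c - b) := by
    intro b
    rw [hG, Polynomial.eval_comp, hq]
    simp
  rcases Nat.even_or_odd F.natDegree with he | ho
  · have h1 : (-1:ℝ)^F.natDegree = 1 := he.neg_one_pow
    have hGlc' : 0 < G.leadingCoeff := by rw [hGlc, h1]; simpa using hlc
    obtain ⟨b, hb1, hb2⟩ := exists_gt_pos G hGlc' (by omega) c
    refine ⟨2*c - b, by linarith, ?_⟩
    rw [h1, one_mul, ← hGeval]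
    exact hb2
  · have h1 : (-1:ℝ)^F.natDegree = -1 := ho.neg_one_pow
    have hGlc' : 0 < (-G).leadingCoeff := by
      rw [Polynomial.leadingCoeff_neg, hGlc, h1]; simpa using hlc
    obtain ⟨b, hb1, hb2⟩ := exists_gt_pos (-G) hGlc' (by rw [Polynomial.natDegree_neg]; omega) c
    rw [Polynomial.eval_neg] at hb2
    refine ⟨2*c - b, by linarith, ?_⟩
    rw [h1, ← hGeval]
    linarith

lemma Np_le_card (p : Polynomial ℝ) (x : ℝ) : Np p x ≤ Multiset.card p.roots :=
  Multiset.countP_le_card _ _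

lemma count_ge (p h : Polynomial ℝ)
    (hb1 : ∀ x, Np h x ≤ Np p x) (hb2 : ∀ x, Np p x ≤ Np h x + 1) (γ : ℝ) :
    h.roots.count γ ≤ p.roots.count γ + 1 := by
  have e1 := Np_eq_Pp_add_count p γ
  have e2 := Np_eq_Pp_add_count h γ
  have e3 := Pp_le_Pp p h hb2 γ
  have e4 := hb1 γ
  have e5 : Pp h γ ≤ Pp p γ := by
    obtain ⟨x, hγx, hall⟩ := exists_sep (p.roots + h.roots) γ
    rw [← Np_sep p hγx (fun a ha => hall a (Multiset.mem_add.2 (Or.inl ha))),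
        ← Np_sep h hγx (fun a ha => hall a (Multiset.mem_add.2 (Or.inr ha)))]
    exact hb1 x
  omega

lemma sign_at_root (h p : Polynomial ℝ) (hpr : RealRooted p) (hlp : 0 < p.leadingCoeff)
    (hb1 : ∀ x, Np h x ≤ Np p x) (hb2 : ∀ x, Np p x ≤ Np h x + 1)
    (γ : ℝ) (j : ℕ) (hNp : Np h γ = j + 1) (hPp : Pp h γ = j) :
    0 ≤ (-1:ℝ)^(j+1) * p.eval γ ∧ (p.eval γ ≠ 0 → 0 < (-1:ℝ)^(j+1) * p.eval γ) := by
  by_cases hz : p.eval γ = 0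
  · rw [hz]; simp
  · have hcnt : p.roots.count γ = 0 := by
      by_contra hc
      have hmem : γ ∈ p.roots := Multiset.count_pos.1 (Nat.pos_of_ne_zero hc)
      exact hz (Polynomial.isRoot_of_mem_roots hmem)
    have h1 : Np p γ = Pp p γ := by rw [Np_eq_Pp_add_count, hcnt, add_zero]
    have h2 : j + 1 ≤ Np p γ := by rw [← hNp]; exact hb1 γ
    have h3 : Pp p γ ≤ j + 1 := by have := Pp_le_Pp p h hb2 γ; omega
    have h4 : Pp p γ = j + 1 := by omega
    have hs := eval_sign p hpr hlp γ hz
    rw [h4] at hs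
    exact ⟨hs.le, fun _ => hs⟩

lemma nocommon_case (m : ℕ) (f g h : Polynomial ℝ)
    (hm : h.natDegree = m) (hm1 : 1 ≤ m)
    (hfr : RealRooted f) (hgr : RealRooted g) (hhr : RealRooted h)
    (hlf : 0 < f.leadingCoeff) (hlg : 0 < g.leadingCoeff) (hlh : 0 < h.leadingCoeff)
    (hdf : f.natDegree = m ∨ f.natDegree = m + 1)
    (hdg : g.natDegree = m ∨ g.natDegree = m + 1)
    (hbf1 : ∀ x, Np h x ≤ Np f x) (hbf2 : ∀ x, Np f x ≤ Np h x + 1)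
    (hbg1 : ∀ x, Np h x ≤ Np g x) (hbg2 : ∀ x, Np g x ≤ Np h x + 1)
    (hnc : ∀ γ ∈ h.roots, ¬ (f.IsRoot γ ∧ g.IsRoot γ)) :
    RealRooted (f + g) ∧ ∀ x, Np h x ≤ Np (f + g) x ∧ Np (f + g) x ≤ Np h x + 1 := by
  set L := rootsDesc h with hL
  have hcard : Multiset.card h.roots = m := by rw [hhr, hm]
  have lenL : L.length = m := by rw [hL, length_rootsDesc, hcard]
  have hf0 : f ≠ 0 := fun hh => by simp [hh] at hlf
  have hg0 : g ≠ 0 := fun hh => by simp [hh] at hlg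
  -- h has no repeated roots
  have hnodup : h.roots.Nodup := by
    rw [Multiset.nodup_iff_count_le_one]
    intro γ
    by_contra hc
    push_neg at hc
    have hmem : γ ∈ h.roots := Multiset.count_pos.1 (by omega)
    have hcf := count_ge f h hbf1 hbf2 γ
    have hcg := count_ge g h hbg1 hbg2 γ
    have hrf : f.IsRoot γ :=
      Polynomial.isRoot_of_mem_roots (Multiset.count_pos.1 (by omega))
    have hrg : g.IsRoot γ :=
      Polynomial.isRoot_of_mem_roots (Multiset.count_pos.1 (by omega))
    exact hnc γ hmem ⟨hrf, hrg⟩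
  have hLnodup : L.Nodup := by
    have : (↑L : Multiset ℝ) = h.roots := coe_rootsDesc h
    rw [← Multiset.coe_nodup]
    rw [this]; exact hnodup
  have hstrict : ∀ i j (hi : i < L.length) (hj : j < L.length), i < j →
      L.get ⟨j, hj⟩ < L.get ⟨i, hi⟩ := by
    intro i j hi hj hij
    have h1 := rootsDesc_anti h i j hi hj hij.le
    have h2 : L.get ⟨j, hj⟩ ≠ L.get ⟨i, hi⟩ := by
      intro he
      have := List.Nodup.get_inj_iff hLnodup (i := ⟨j, hj⟩) (j := ⟨i, hi⟩)
      have := this.1 he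
      simp at this
      omega
    exact lt_of_le_of_ne h1 h2
  have hLmem : ∀ j (hj : j < L.length), L.get ⟨j, hj⟩ ∈ h.roots := by
    intro j hj
    rw [← coe_rootsDesc h]
    exact List.get_mem L ⟨j, hj⟩
  -- counting values at the roots
  have hPpL : ∀ j (hj : j < L.length), Pp h (L.get ⟨j, hj⟩) = j := by
    intro j hj
    have hub : Pp h (L.get ⟨j, hj⟩) ≤ j := by
      by_contra hc
      push_neg at hc
      have := (lt_get_iff h (L.get ⟨j, hj⟩) j hj).2 hc
      exact lt_irrefl _ this
    rcases Nat.eq_zero_or_pos j with rfl | hj0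
    · omega
    · have hj1 : j - 1 < L.length := by omega
      have hlt : L.get ⟨j, hj⟩ < L.get ⟨j-1, hj1⟩ := hstrict _ _ _ _ (by omega)
      have := (lt_get_iff h (L.get ⟨j, hj⟩) (j-1) hj1).1 hlt
      omega
  have hNpL : ∀ j (hj : j < L.length), Np h (L.get ⟨j, hj⟩) = j + 1 := by
    intro j hj
    have hlb : j < Np h (L.get ⟨j, hj⟩) := (le_get_iff h _ j hj).1 le_rfl
    by_cases hj1 : j + 1 < L.length
    · have hlt : L.get ⟨j+1, hj1⟩ < L.get ⟨j, hj⟩ := hstrict _ _ _ _ (by omega)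
      have := (le_get_iff h (L.get ⟨j, hj⟩) (j+1) hj1)
      have hub : ¬ (j + 1 < Np h (L.get ⟨j, hj⟩)) := fun hc => absurd (this.2 hc) (by linarith)
      omega
    · have := Np_le_card h (L.get ⟨j, hj⟩)
      rw [hcard] at this
      rw [← lenL] at this
      omega
  -- sign of f+g at the roots of h
  have hsgn : ∀ j (hj : j < L.length), 0 < (-1:ℝ)^(j+1) * (f+g).eval (L.get ⟨j, hj⟩) := by
    intro j hj
    have hsf := sign_at_root h f hfr hlf hbf1 hbf2 _ j (hNpL j hj) (hPpL j hj)
    have hsg := sign_at_root h g hgr hlg hbg1 hbg2 _ j (hNpL j hj) (hPpL j hj)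
    have hnz : f.eval (L.get ⟨j, hj⟩) ≠ 0 ∨ g.eval (L.get ⟨j, hj⟩) ≠ 0 := by
      by_contra hc
      push_neg at hc
      exact hnc _ (hLmem j hj) ⟨hc.1, hc.2⟩
    rw [Polynomial.eval_add, mul_add]
    rcases hnz with hnz | hnz
    · have := hsf.2 hnz; linarith [hsg.1]
    · have := hsg.2 hnz; linarith [hsf.1]
  -- degree facts for F
  obtain ⟨hFdeg, hFlc⟩ := add_lc f g hlf hlg
  set n := (f + g).natDegree with hn
  have hF0 : (f + g) ≠ 0 := fun hh => by simp [hh] at hFlc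
  have hnm : n = m ∨ n = m + 1 := by
    rcases hdf with h' | h' <;> rcases hdg with h'' | h'' <;>
      rw [show n = f.natDegree ⊔ g.natDegree from hFdeg, h', h''] <;> omega
  have hn1 : 1 ≤ n := by omega
  -- the chain of roots of F
  have chain : ∀ k, k < n → ∃ x, (f+g).eval x = 0 ∧
      (∀ (hk : k < L.length), L.get ⟨k, hk⟩ < x) ∧
      (1 ≤ k → ∀ (hk1 : k - 1 < L.length), x < L.get ⟨k-1, hk1⟩) := by
    intro k hk
    rcases Nat.eq_zero_or_pos k with rfl | hk0
    · have h0m : (0:ℕ) < L.length := by omega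
      have hs := hsgn 0 h0m
      have hFneg : (f+g).eval (L.get ⟨0, h0m⟩) < 0 := by
        rw [pow_one] at hs; linarith
      obtain ⟨b, hb1, hb2⟩ := exists_gt_pos (f+g) hFlc (by omega) (L.get ⟨0, h0m⟩)
      obtain ⟨x, hx1, hx2, hx3⟩ := exists_root_between (f+g) hb1 hFneg hb2
      exact ⟨x, hx3, fun _ => hx1, by omega⟩
    · by_cases hkm : k < L.length
      · have hk1 : k - 1 < L.length := by omega
        have ha := hsgn k hkm
        have hb := hsgn (k-1) hk1
        have hab : L.get ⟨k, hkm⟩ < L.get ⟨k-1, hk1⟩ := hstrict _ _ _ _ (by omega)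
        have hkk : k - 1 + 1 = k := by omega
        rw [hkk] at hb
        rcases Nat.even_or_odd k with he | ho
        · have e1 : (-1:ℝ)^(k+1) = -1 := by rw [pow_succ, he.neg_one_pow]; ring
          have e2 : (-1:ℝ)^k = 1 := he.neg_one_pow
          rw [e1] at ha; rw [e2, one_mul] at hb
          obtain ⟨x, hx1, hx2, hx3⟩ :=
            exists_root_between (f+g) hab (by linarith) (by linarith)
          exact ⟨x, hx3, fun _ => hx1, fun _ _ => hx2⟩
        · have e1 : (-1:ℝ)^(k+1) = 1 := ho.add_one.neg_one_pow
          have e2 : (-1:ℝ)^k = -1 := ho.neg_one_pow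
          rw [e1, one_mul] at ha; rw [e2] at hb
          obtain ⟨x, hx1, hx2, hx3⟩ := exists_root_between (-(f+g)) hab
            (by rw [Polynomial.eval_neg]; linarith) (by rw [Polynomial.eval_neg]; linarith)
          refine ⟨x, ?_, fun _ => hx1, fun _ _ => hx2⟩
          rw [Polynomial.eval_neg, neg_eq_zero] at hx3
          exact hx3
      · have hkm' : k = m := by omega
        subst hkm'
        have hm1' : k - 1 < L.length := by omega
        have hb := hsgn (k-1) hm1'
        have hmm : k - 1 + 1 = k := by omega
        rw [hmm] at hb
        obtain ⟨a, ha1, ha2⟩ := exists_lt_sign (f+g) hFlc (by omega) (L.get ⟨k-1, hm1'⟩)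
        have hn' : (f+g).natDegree = k + 1 := by omega
        rw [hn'] at ha2
        rcases Nat.even_or_odd k with he | ho
        · have e1 : (-1:ℝ)^k = 1 := he.neg_one_pow
          have e2 : (-1:ℝ)^(k+1) = -1 := by rw [pow_succ, e1]; ring
          rw [e1, one_mul] at hb; rw [e2] at ha2
          obtain ⟨x, hx1, hx2, hx3⟩ := exists_root_between (f+g) ha1 (by linarith) hb
          exact ⟨x, hx3, fun hkk => absurd hkk (by omega), fun _ _ => hx2⟩
        · have e1 : (-1:ℝ)^k = -1 := ho.neg_one_pow
          have e2 : (-1:ℝ)^(k+1) = 1 := ho.add_one.neg_one_pow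
          rw [e1] at hb; rw [e2, one_mul] at ha2
          obtain ⟨x, hx1, hx2, hx3⟩ := exists_root_between (-(f+g)) ha1
            (by rw [Polynomial.eval_neg]; linarith) (by rw [Polynomial.eval_neg]; linarith)
          refine ⟨x, ?_, fun hkk => absurd hkk (by omega), fun _ _ => hx2⟩
          rw [Polynomial.eval_neg, neg_eq_zero] at hx3
          exact hx3
  have hnle : n ≤ m + 1 := by rcases hnm with h' | h' <;> omega
  have hmn : m ≤ n := by rcases hnm with h' | h' <;> omega
  choose δ hδ using fun k (hk : k < n) => chain k hk
  have δroot : ∀ k (hk : k < n), (f+g).eval (δ k hk) = 0 := fun k hk => (hδ k hk).1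
  have δup : ∀ k (hk : k < n) (hkL : k < L.length), L.get ⟨k, hkL⟩ < δ k hk :=
    fun k hk hkL => (hδ k hk).2.1 hkL
  have δdown : ∀ k (hk : k < n) (h1 : 1 ≤ k) (hk1 : k - 1 < L.length),
      δ k hk < L.get ⟨k-1, hk1⟩ := fun k hk h1 hk1 => (hδ k hk).2.2 h1 hk1
  set δ' : ℕ → ℝ := fun k => if hk : k < n then δ k hk else 0 with hδ'
  have δ'root : ∀ k, k < n → (f+g).eval (δ' k) = 0 := by
    intro k hk; rw [hδ']; simp only [dif_pos hk]; exact δroot k hk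
  have δ'up : ∀ k (hk : k < n) (hkL : k < L.length), L.get ⟨k, hkL⟩ < δ' k := by
    intro k hk hkL; rw [hδ']; simp only [dif_pos hk]; exact δup k hk hkL
  have δ'down : ∀ k (hk : k < n) (h1 : 1 ≤ k) (hk1 : k - 1 < L.length),
      δ' k < L.get ⟨k-1, hk1⟩ := by
    intro k hk h1 hk1; rw [hδ']; simp only [dif_pos hk]; exact δdown k hk h1 hk1
  have δanti : ∀ k k', k < k' → k' < n → δ' k' < δ' k := by
    intro k k' hkk hk'
    have hk : k < n := by omega
    have hk1 : k' - 1 < L.length := by omega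
    have hkL : k < L.length := by omega
    have h1 : δ' k' < L.get ⟨k'-1, hk1⟩ := δ'down k' hk' (by omega) hk1
    have h2 : L.get ⟨k'-1, hk1⟩ ≤ L.get ⟨k, hkL⟩ :=
      rootsDesc_anti h k (k'-1) hkL hk1 (by omega)
    have h3 : L.get ⟨k, hkL⟩ < δ' k := δ'up k hk hkL
    linarith
  set S : Finset ℝ := (Finset.range n).image δ' with hS
  have hinj : Set.InjOn δ' (Finset.range n) := by
    intro a ha b hb hab
    simp only [Finset.coe_range, Set.mem_Iio] at ha hb
    by_contra hne
    rcases Nat.lt_or_ge a b with hl | hl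
    · have := δanti a b hl hb; linarith [le_of_eq hab]
    · have hba : b < a := by omega
      have := δanti b a hba ha; linarith [le_of_eq hab]
  have hScard : S.card = n := by
    rw [hS, Finset.card_image_of_injOn hinj, Finset.card_range]
  have hSsub : S ⊆ (f+g).roots.toFinset := by
    intro x hx
    rw [hS] at hx
    simp only [Finset.mem_image, Finset.mem_range] at hx
    obtain ⟨k, hk, rfl⟩ := hx
    rw [Multiset.mem_toFinset, Polynomial.mem_roots hF0]
    exact δ'root k hk
  have hcard1 : Multiset.card (f+g).roots ≤ n := Polynomial.card_roots' _
  have hcard2 : n ≤ (f+g).roots.toFinset.card := by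
    rw [← hScard]; exact Finset.card_le_card hSsub
  have hcard3 : (f+g).roots.toFinset.card ≤ Multiset.card (f+g).roots :=
    Multiset.toFinset_card_le _
  have hFcard : Multiset.card (f+g).roots = n := by omega
  have hTS : (f+g).roots.toFinset = S :=
    (Finset.eq_of_subset_of_card_le hSsub (by omega)).symm
  have hFnodup : (f+g).roots.Nodup := by
    have hd : (f+g).roots.dedup = (f+g).roots := by
      apply Multiset.eq_of_le_of_card_le (Multiset.dedup_le _)
      have he : Multiset.card (f+g).roots.dedup = (f+g).roots.toFinset.card := rfl
      omega
    exact Multiset.dedup_eq_self.1 hd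
  have hroots_eq : (f+g).roots = S.val := by
    rw [← hTS]
    exact (Multiset.dedup_eq_self.2 hFnodup).symm
  refine ⟨hFcard, ?_⟩
  intro x
  have hNpF : Np (f+g) x = ((Finset.range n).filter (fun k => x ≤ δ' k)).card := by
    rw [Np, hroots_eq]
    have e1 : Multiset.countP (fun a => x ≤ a) S.val
        = (S.filter (fun a => x ≤ a)).card := by
      rw [Multiset.countP_eq_card_filter]; rfl
    rw [e1, hS, Finset.filter_image]
    apply Finset.card_image_of_injOn
    exact hinj.mono (by intro t ht; simp only [Finset.coe_filter, Set.mem_setOf_eq,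
      Finset.mem_range, Finset.coe_range, Set.mem_Iio] at ht ⊢; exact ht.1)
  have hkmle : Np h x ≤ m := by have := Np_le_card h x; omega
  constructor
  · rw [hNpF]
    have hsub : Finset.range (Np h x) ⊆ (Finset.range n).filter (fun k => x ≤ δ' k) := by
      intro j hj
      rw [Finset.mem_range] at hj
      have hjL : j < L.length := by omega
      have hxL : x ≤ L.get ⟨j, hjL⟩ := (le_get_iff h x j hjL).2 hj
      have : L.get ⟨j, hjL⟩ < δ' j := δ'up j (by omega) hjL
      rw [Finset.mem_filter, Finset.mem_range]
      exact ⟨by omega, by linarith⟩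
    have := Finset.card_le_card hsub
    rw [Finset.card_range] at this
    exact this
  · rw [hNpF]
    have hsub : (Finset.range n).filter (fun j => x ≤ δ' j) ⊆ Finset.range (Np h x + 1) := by
      intro j hj
      rw [Finset.mem_filter, Finset.mem_range] at hj
      rw [Finset.mem_range]
      rcases Nat.eq_zero_or_pos j with rfl | hj1
      · omega
      · have hk1 : j - 1 < L.length := by omega
        have hdj := δ'down j hj.1 hj1 hk1
        have hxle : x ≤ L.get ⟨j-1, hk1⟩ := le_of_lt (lt_of_le_of_lt hj.2 hdj)
        have := (le_get_iff h x (j-1) hk1).1 hxle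
        omega
    have := Finset.card_le_card hsub
    rw [Finset.card_range] at this
    exact this

lemma factor_out (p : Polynomial ℝ) (γ : ℝ) (hp : 0 < p.leadingCoeff)
    (hr : RealRooted p) (hroot : p.IsRoot γ) :
    ∃ p1, p = (Polynomial.X - Polynomial.C γ) * p1 ∧ 0 < p1.leadingCoeff ∧
      RealRooted p1 ∧ p1.natDegree + 1 = p.natDegree ∧
      (∀ x, Np p x = Np p1 x + if x ≤ γ then 1 else 0) := by
  have hp0 : p ≠ 0 := fun hh => by simp [hh] at hp
  obtain ⟨p1, hp1⟩ := (Polynomial.dvd_iff_isRoot).2 hroot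
  have hX0 : (Polynomial.X - Polynomial.C γ) ≠ 0 := Polynomial.X_sub_C_ne_zero γ
  have hp10 : p1 ≠ 0 := by
    intro hh; rw [hh, mul_zero] at hp1; exact hp0 hp1
  have hlc : p1.leadingCoeff = p.leadingCoeff := by
    rw [hp1, Polynomial.leadingCoeff_mul, Polynomial.leadingCoeff_X_sub_C, one_mul]
  have hdeg : p.natDegree = p1.natDegree + 1 := by
    rw [hp1, Polynomial.natDegree_mul hX0 hp10, Polynomial.natDegree_X_sub_C]
    omega
  have hroots : p.roots = γ ::ₘ p1.roots := by
    rw [hp1, Polynomial.roots_mul (by rw [← hp1]; exact hp0), Polynomial.roots_X_sub_C]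
    rfl
  have hr1 : RealRooted p1 := by
    have hc : Multiset.card p.roots = Multiset.card p1.roots + 1 := by
      rw [hroots, Multiset.card_cons]
    rw [RealRooted] at hr ⊢
    omega
  refine ⟨p1, hp1, by rw [hlc]; exact hp, hr1, by omega, ?_⟩
  intro x
  rw [Np, Np, hroots, Multiset.countP_cons]

lemma core : ∀ m (f g h : Polynomial ℝ),
    h.natDegree = m →
    RealRooted f → RealRooted g → RealRooted h →
    0 < f.leadingCoeff → 0 < g.leadingCoeff → 0 < h.leadingCoeff →
    (f.natDegree = m ∨ f.natDegree = m + 1) →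
    (g.natDegree = m ∨ g.natDegree = m + 1) →
    (∀ x, Np h x ≤ Np f x) → (∀ x, Np f x ≤ Np h x + 1) →
    (∀ x, Np h x ≤ Np g x) → (∀ x, Np g x ≤ Np h x + 1) →
    RealRooted (f + g) ∧ ∀ x, Np h x ≤ Np (f + g) x ∧ Np (f + g) x ≤ Np h x + 1 := by
  intro m
  induction m with
  | zero =>
    intro f g h hm hfr hgr hhr hlf hlg hlh hdf hdg hbf1 hbf2 hbg1 hbg2
    have hhroots : h.roots = 0 := by
      have : Multiset.card h.roots = 0 := by rw [hhr, hm]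
      exact Multiset.card_eq_zero.1 this
    have hNh : ∀ x, Np h x = 0 := by intro x; rw [Np, hhroots]; rfl
    obtain ⟨hFdeg, hFlc⟩ := add_lc f g hlf hlg
    have hF0 : f + g ≠ 0 := fun hh => by simp [hh] at hFlc
    have hn : (f+g).natDegree = 0 ∨ (f+g).natDegree = 1 := by
      rcases hdf with h'|h' <;> rcases hdg with h''|h'' <;> rw [hFdeg, h', h''] <;> omega
    rcases hn with hn | hn
    · have hc : Multiset.card (f+g).roots = 0 := by
        have := Polynomial.card_roots' (f+g); omega
      refine ⟨by rw [RealRooted, hc, hn], ?_⟩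
      intro x
      have h2 := Np_le_card (f+g) x
      rw [hNh x]
      omega
    · obtain ⟨a, ha1, ha2⟩ := exists_lt_sign (f+g) hFlc (by omega) 0
      rw [hn, pow_one] at ha2
      obtain ⟨b, hb1, hb2⟩ := exists_gt_pos (f+g) hFlc (by omega) a
      obtain ⟨x0, _, _, hx0⟩ := exists_root_between (f+g) hb1 (by linarith) hb2
      have hmem : x0 ∈ (f+g).roots := (Polynomial.mem_roots hF0).2 hx0
      have hc1 : 0 < Multiset.card (f+g).roots :=
        Multiset.card_pos_iff_exists_mem.2 ⟨x0, hmem⟩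
      have hc2 := Polynomial.card_roots' (f+g)
      refine ⟨by rw [RealRooted]; omega, ?_⟩
      intro x
      have h2 := Np_le_card (f+g) x
      rw [hNh x]
      omega
  | succ m ih =>
    intro f g h hm hfr hgr hhr hlf hlg hlh hdf hdg hbf1 hbf2 hbg1 hbg2
    by_cases hcom : ∃ γ ∈ h.roots, f.IsRoot γ ∧ g.IsRoot γ
    · obtain ⟨γ, hγmem, hfγ, hgγ⟩ := hcom
      have hγh : h.IsRoot γ := Polynomial.isRoot_of_mem_roots hγmem
      obtain ⟨f1, hf1, hlf1, hfr1, hdf1, hNf⟩ := factor_out f γ hlf hfr hfγ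
      obtain ⟨g1, hg1, hlg1, hgr1, hdg1, hNg⟩ := factor_out g γ hlg hgr hgγ
      obtain ⟨h1, hh1, hlh1, hhr1, hdh1, hNh⟩ := factor_out h γ hlh hhr hγh
      have hdh1' : h1.natDegree = m := by omega
      have hbf1' : ∀ x, Np h1 x ≤ Np f1 x := by
        intro x; have := hbf1 x; rw [hNf x, hNh x] at this
        rcases le_or_gt x γ with hc | hc
        · simp only [if_pos hc] at this; omega
        · simp only [if_neg (not_le.2 hc)] at this; omega
      have hbf2' : ∀ x, Np f1 x ≤ Np h1 x + 1 := by
        intro x; have := hbf2 x; rw [hNf x, hNh x] at this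
        rcases le_or_gt x γ with hc | hc
        · simp only [if_pos hc] at this; omega
        · simp only [if_neg (not_le.2 hc)] at this; omega
      have hbg1' : ∀ x, Np h1 x ≤ Np g1 x := by
        intro x; have := hbg1 x; rw [hNg x, hNh x] at this
        rcases le_or_gt x γ with hc | hc
        · simp only [if_pos hc] at this; omega
        · simp only [if_neg (not_le.2 hc)] at this; omega
      have hbg2' : ∀ x, Np g1 x ≤ Np h1 x + 1 := by
        intro x; have := hbg2 x; rw [hNg x, hNh x] at this
        rcases le_or_gt x γ with hc | hc
        · simp only [if_pos hc] at this; omega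
        · simp only [if_neg (not_le.2 hc)] at this; omega
      obtain ⟨hFr1, hFb1⟩ := ih f1 g1 h1 hdh1' hfr1 hgr1 hhr1 hlf1 hlg1 hlh1
        (by omega) (by omega) hbf1' hbf2' hbg1' hbg2'
      obtain ⟨hF1deg, hF1lc⟩ := add_lc f1 g1 hlf1 hlg1
      have hF10 : f1 + g1 ≠ 0 := fun hh => by simp [hh] at hF1lc
      have hX0 : (Polynomial.X - Polynomial.C γ) ≠ 0 := Polynomial.X_sub_C_ne_zero γ
      have hFeq : f + g = (Polynomial.X - Polynomial.C γ) * (f1 + g1) := by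
        rw [hf1, hg1]; ring
      have hF0 : f + g ≠ 0 := by
        rw [hFeq]; exact mul_ne_zero hX0 hF10
      have hFroots : (f+g).roots = γ ::ₘ (f1+g1).roots := by
        rw [hFeq, Polynomial.roots_mul (by rw [← hFeq]; exact hF0),
          Polynomial.roots_X_sub_C]
        rfl
      have hFdeg' : (f+g).natDegree = (f1+g1).natDegree + 1 := by
        rw [hFeq, Polynomial.natDegree_mul hX0 hF10, Polynomial.natDegree_X_sub_C]
        omega
      have hNF : ∀ x, Np (f+g) x = Np (f1+g1) x + if x ≤ γ then 1 else 0 := by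
        intro x
        rw [Np, Np, hFroots, Multiset.countP_cons]
      constructor
      · rw [RealRooted, hFroots, Multiset.card_cons, hFdeg', hFr1]
      · intro x
        have h1b := hFb1 x
        rw [hNF x, hNh x]
        rcases le_or_gt x γ with hc | hc
        · simp only [if_pos hc]; omega
        · simp only [if_neg (not_le.2 hc)]; omega
    · refine nocommon_case (m+1) f g h hm (by omega) hfr hgr hhr hlf hlg hlh hdf hdg
        hbf1 hbf2 hbg1 hbg2 ?_
      intro γ hγ hiff
      exact hcom ⟨γ, hγ, hiff⟩

lemma interlaces_to_Np {h f : Polynomial ℝ}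
    (hfr : RealRooted f) (hhr : RealRooted h)
    (hdeg : f.natDegree = h.natDegree ∨ f.natDegree = h.natDegree + 1)
    (c1 : ∀ (i : ℕ) (hg : i < (rootsDesc h).length) (hf : i < (rootsDesc f).length),
      (rootsDesc h).get ⟨i, hg⟩ ≤ (rootsDesc f).get ⟨i, hf⟩)
    (c2 : ∀ (i : ℕ) (hf : i + 1 < (rootsDesc f).length) (hg : i < (rootsDesc h).length),
      (rootsDesc f).get ⟨i + 1, hf⟩ ≤ (rootsDesc h).get ⟨i, hg⟩) :
    (∀ x, Np h x ≤ Np f x) ∧ (∀ x, Np f x ≤ Np h x + 1) := by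
  have lenh : (rootsDesc h).length = h.natDegree := by rw [length_rootsDesc, hhr]
  have lenf : (rootsDesc f).length = f.natDegree := by rw [length_rootsDesc, hfr]
  constructor
  · intro x
    by_contra hcon
    push_neg at hcon
    have hcard : Np h x ≤ (rootsDesc h).length := by
      rw [length_rootsDesc]; exact Np_le_card h x
    have hi : Np h x - 1 < (rootsDesc h).length := by omega
    have hif : Np h x - 1 < (rootsDesc f).length := by
      rw [lenf]; rw [lenh] at hi; omega
    have hx1 : x ≤ (rootsDesc h).get ⟨Np h x - 1, hi⟩ :=
      (le_get_iff h x _ hi).2 (by omega)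
    have hx2 := le_trans hx1 (c1 _ hi hif)
    have := (le_get_iff f x _ hif).1 hx2
    omega
  · intro x
    by_contra hcon
    push_neg at hcon
    have hcard : Np f x ≤ (rootsDesc f).length := by
      rw [length_rootsDesc]; exact Np_le_card f x
    have hif : Np h x + 1 < (rootsDesc f).length := by omega
    have hig : Np h x < (rootsDesc h).length := by
      rw [lenh]; rw [lenf] at hif; omega
    have hx1 : x ≤ (rootsDesc f).get ⟨Np h x + 1, hif⟩ :=
      (le_get_iff f x _ hif).2 (by omega)
    have hx2 : x ≤ (rootsDesc h).get ⟨Np h x, hig⟩ := le_trans hx1 (c2 _ hif hig)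
    have := (le_get_iff h x _ hig).1 hx2
    omega

lemma Np_to_interlaces {h F : Polynomial ℝ}
    (b1 : ∀ x, Np h x ≤ Np F x) (b2 : ∀ x, Np F x ≤ Np h x + 1) :
    (∀ (i : ℕ) (hg : i < (rootsDesc h).length) (hf : i < (rootsDesc F).length),
      (rootsDesc h).get ⟨i, hg⟩ ≤ (rootsDesc F).get ⟨i, hf⟩) ∧
    (∀ (i : ℕ) (hf : i + 1 < (rootsDesc F).length) (hg : i < (rootsDesc h).length),
      (rootsDesc F).get ⟨i + 1, hf⟩ ≤ (rootsDesc h).get ⟨i, hg⟩) := by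
  constructor
  · intro i hg hf
    have h1 : i < Np h ((rootsDesc h).get ⟨i, hg⟩) := (le_get_iff h _ i hg).1 le_rfl
    have h2 : i < Np F ((rootsDesc h).get ⟨i, hg⟩) := lt_of_lt_of_le h1 (b1 _)
    exact (le_get_iff F _ i hf).2 h2
  · intro i hf hg
    by_contra hcon
    push_neg at hcon
    have h1 : i + 1 < Np F ((rootsDesc F).get ⟨i+1, hf⟩) :=
      (le_get_iff F _ (i+1) hf).1 le_rfl
    have h2 : i < Np h ((rootsDesc F).get ⟨i+1, hf⟩) := by
      have := b2 ((rootsDesc F).get ⟨i+1, hf⟩); omega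
    have h3 := (le_get_iff h _ i hg).2 h2
    linarith

/-- If `f`, `g`, `h` are real-rooted polynomials with nonnegative coefficients
such that `h ⪯ f` and `h ⪯ g`, then `h ⪯ f + g`. -/
theorem stmt1 (f g h : Polynomial ℝ)
    (hfc : ∀ i, 0 ≤ f.coeff i) (hgc : ∀ i, 0 ≤ g.coeff i) (hhc : ∀ i, 0 ≤ h.coeff i)
    (hfr : RealRooted f) (hgr : RealRooted g) (hhr : RealRooted h)
    (h1 : Interlaces h f) (h2 : Interlaces h g) :
    Interlaces h (f + g) := by
  obtain ⟨_, _, hlf, hlh, hdf, c1f, c2f⟩ := h1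
  obtain ⟨_, _, hlg, _, hdg, c1g, c2g⟩ := h2
  obtain ⟨bf1, bf2⟩ := interlaces_to_Np hfr hhr hdf c1f c2f
  obtain ⟨bg1, bg2⟩ := interlaces_to_Np hgr hhr hdg c1g c2g
  obtain ⟨hFr, hFb⟩ := core h.natDegree f g h rfl hfr hgr hhr hlf hlg hlh hdf hdg
    bf1 bf2 bg1 bg2
  obtain ⟨hFdeg, hFlc⟩ := add_lc f g hlf hlg
  obtain ⟨cc1, cc2⟩ := Np_to_interlaces (fun x => (hFb x).1) (fun x => (hFb x).2)
  refine ⟨hFr, hhr, hFlc, hlh, ?_, cc1, cc2⟩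
  rcases hdf with h'|h' <;> rcases hdg with h''|h'' <;> rw [hFdeg, h', h''] <;> omega
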